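/- For any integer N ≥ 1, the quotient Γ(N)/Γ(N²) is isomorphic to the additive group M₂(Z/N)⁰ of traceless 2×2 matrices over Z/N, via the map sending a matrix A ∈ Γ(N) (so A = 1 + N·B for an integer matrix B) to the reduction of B modulo N. -/
import Mathlib

open Matrix CongruenceSubgroup
open scoped MatrixGroups

namespace GammaQuotAux

variable (N : ℕ)

/-- entrywise `(A - 1)/N`. -/
def bmat (A : Matrix (Fin 2) (Fin 2) ℤ) : Matrix (Fin 2) (Fin 2) ℤ :=
  fun i j => (A - 1) i j / (N : ℤ)

lemma dvd_entries {A : SL(2, ℤ)} (hA : A ∈ Gamma N) (i j : Fin 2) :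
    (N : ℤ) ∣ ((A : Matrix (Fin 2) (Fin 2) ℤ) - 1) i j := by
  obtain ⟨h1, h2, h3, h4⟩ := Gamma_mem.mp hA
  rw [← ZMod.intCast_zmod_eq_zero_iff_dvd]
  fin_cases i <;> fin_cases j <;>
    simp [Matrix.sub_apply, Matrix.one_apply] <;> push_cast <;>
    simp_all

lemma smul_bmat {A : SL(2, ℤ)} (hA : A ∈ Gamma N) :
    (N : ℤ) • bmat N (A : Matrix (Fin 2) (Fin 2) ℤ)
      = (A : Matrix (Fin 2) (Fin 2) ℤ) - 1 := by
  ext i j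
  simp only [Matrix.smul_apply, bmat, smul_eq_mul]
  exact Int.mul_ediv_cancel' (dvd_entries N hA i j)

lemma smul_cancel (hN : 1 ≤ N) {X Y : Matrix (Fin 2) (Fin 2) ℤ}
    (h : (N : ℤ) • X = (N : ℤ) • Y) : X = Y := by
  have hN0 : (N : ℤ) ≠ 0 := by exact_mod_cast Nat.one_le_iff_ne_zero.mp hN
  ext i j
  have := congrFun (congrFun h i) j
  simp only [Matrix.smul_apply, smul_eq_mul] at this
  exact mul_left_cancel₀ hN0 this

lemma bmat_eq (hN : 1 ≤ N) {A : SL(2, ℤ)} (hA : A ∈ Gamma N)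
    {B : Matrix (Fin 2) (Fin 2) ℤ}
    (h : (A : Matrix (Fin 2) (Fin 2) ℤ) = 1 + (N : ℤ) • B) :
    bmat N (A : Matrix (Fin 2) (Fin 2) ℤ) = B := by
  apply smul_cancel N hN
  rw [smul_bmat N hA, h]; abel

/-- reduction of `bmat` mod N. -/
def cmat (A : Matrix (Fin 2) (Fin 2) ℤ) : Matrix (Fin 2) (Fin 2) (ZMod N) :=
  (bmat N A).map (Int.cast : ℤ → ZMod N)

lemma trace_cmat (hN : 1 ≤ N) {A : SL(2, ℤ)} (hA : A ∈ Gamma N) :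
    Matrix.trace (cmat N (A : Matrix (Fin 2) (Fin 2) ℤ)) = 0 := by
  set b := bmat N (A : Matrix (Fin 2) (Fin 2) ℤ) with hb
  have hN0 : (N : ℤ) ≠ 0 := by exact_mod_cast Nat.one_le_iff_ne_zero.mp hN
  have hsm := smul_bmat N hA
  have he : ∀ i j, (A : Matrix (Fin 2) (Fin 2) ℤ) i j = (1 : Matrix (Fin 2) (Fin 2) ℤ) i j + (N : ℤ) * b i j := by
    intro i j
    have := congrFun (congrFun hsm i) j
    simp only [Matrix.smul_apply, Matrix.sub_apply, smul_eq_mul] at this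
    linarith
  have hdet : (A : Matrix (Fin 2) (Fin 2) ℤ) 0 0 * (A : Matrix (Fin 2) (Fin 2) ℤ) 1 1
      - (A : Matrix (Fin 2) (Fin 2) ℤ) 0 1 * (A : Matrix (Fin 2) (Fin 2) ℤ) 1 0 = 1 := by
    have := A.property
    rwa [Matrix.det_fin_two] at this
  rw [he 0 0, he 1 1, he 0 1, he 1 0] at hdet
  simp [Matrix.one_apply] at hdet
  have key : (N : ℤ) * (b 0 0 + b 1 1 + (N : ℤ) * (b 0 0 * b 1 1 - b 0 1 * b 1 0)) = 0 := by
    ring_nf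
    ring_nf at hdet
    linarith
  have key2 : b 0 0 + b 1 1 = (N : ℤ) * (-(b 0 0 * b 1 1 - b 0 1 * b 1 0)) := by
    have := mul_eq_zero.mp key
    rcases this with h | h
    · exact absurd h hN0
    · linarith
  have : Matrix.trace (cmat N (A : Matrix (Fin 2) (Fin 2) ℤ))
      = ((b 0 0 + b 1 1 : ℤ) : ZMod N) := by
    simp [cmat, Matrix.trace, ← hb, Fin.sum_univ_two, Matrix.diag]
  rw [this, key2]
  push_cast
  simp


lemma cmat_smul_add (X Y Z : Matrix (Fin 2) (Fin 2) ℤ) :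
    (((N : ℤ) • X + Y + Z).map (Int.cast : ℤ → ZMod N))
      = Y.map (Int.cast : ℤ → ZMod N) + Z.map (Int.cast : ℤ → ZMod N) := by
  ext i j
  simp only [Matrix.map_apply, Matrix.add_apply, Matrix.smul_apply, smul_eq_mul]
  push_cast
  simp

lemma cmat_mul (hN : 1 ≤ N) {A B : SL(2, ℤ)} (hA : A ∈ Gamma N) (hB : B ∈ Gamma N) :
    cmat N ((A * B : SL(2, ℤ)) : Matrix (Fin 2) (Fin 2) ℤ)
      = cmat N (A : Matrix (Fin 2) (Fin 2) ℤ) + cmat N (B : Matrix (Fin 2) (Fin 2) ℤ) := by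
  set a := bmat N (A : Matrix (Fin 2) (Fin 2) ℤ)
  set b := bmat N (B : Matrix (Fin 2) (Fin 2) ℤ)
  have hab : bmat N ((A * B : SL(2, ℤ)) : Matrix (Fin 2) (Fin 2) ℤ)
      = (N : ℤ) • (a * b) + a + b := by
    apply smul_cancel N hN
    rw [smul_bmat N (Subgroup.mul_mem _ hA hB)]
    have h1 := smul_bmat N hA
    have h2 := smul_bmat N hB
    have hmul : ((A * B : SL(2, ℤ)) : Matrix (Fin 2) (Fin 2) ℤ)
        = (A : Matrix (Fin 2) (Fin 2) ℤ) * (B : Matrix (Fin 2) (Fin 2) ℤ) := by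
      simp
    rw [hmul]
    have e1 : (A : Matrix (Fin 2) (Fin 2) ℤ) = 1 + (N : ℤ) • a := by
      rw [sub_eq_iff_eq_add.mp h1.symm]; abel
    have e2 : (B : Matrix (Fin 2) (Fin 2) ℤ) = 1 + (N : ℤ) • b := by
      rw [sub_eq_iff_eq_add.mp h2.symm]; abel
    rw [e1, e2]
    simp only [smul_add, mul_add, add_mul, one_mul, mul_one, smul_smul,
      smul_mul_assoc, mul_smul_comm]
    abel
  rw [cmat, hab, cmat_smul_add]
  rfl

/-- The homomorphism. -/
noncomputable def phi (hN : 1 ≤ N) : (Gamma N) →*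
    Multiplicative (LinearMap.ker (Matrix.traceLinearMap (Fin 2) (ZMod N) (ZMod N))) :=
  MonoidHom.mk'
    (fun A => Multiplicative.ofAdd
      ⟨cmat N ((A : SL(2, ℤ)) : Matrix (Fin 2) (Fin 2) ℤ), by
        rw [LinearMap.mem_ker]
        simpa using trace_cmat N hN A.2⟩)
    (by
      intro A B
      rw [← ofAdd_add]
      exact Subtype.ext (cmat_mul N hN A.2 B.2))


lemma mem_gamma_sq_iff (hN : 1 ≤ N) {A : SL(2, ℤ)} (hA : A ∈ Gamma N) :
    A ∈ Gamma (N ^ 2) ↔ cmat N (A : Matrix (Fin 2) (Fin 2) ℤ) = 0 := by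
  have hN0 : (N : ℤ) ≠ 0 := by exact_mod_cast Nat.one_le_iff_ne_zero.mp hN
  have key : ∀ i j : Fin 2, (((A : Matrix (Fin 2) (Fin 2) ℤ) i j : ℤ) : ZMod (N ^ 2))
      = (((1 : Matrix (Fin 2) (Fin 2) ℤ) i j : ℤ) : ZMod (N ^ 2))
      ↔ ((bmat N (A : Matrix (Fin 2) (Fin 2) ℤ) i j : ℤ) : ZMod N) = 0 := by
    intro i j
    rw [← sub_eq_zero, ← Int.cast_sub, ZMod.intCast_zmod_eq_zero_iff_dvd,
      ZMod.intCast_zmod_eq_zero_iff_dvd]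
    have hb := congrFun (congrFun (smul_bmat N hA) i) j
    simp only [Matrix.smul_apply, Matrix.sub_apply, smul_eq_mul] at hb
    rw [← hb]
    have : ((N : ℤ)) ^ 2 = (N : ℤ) * (N : ℤ) := sq (N : ℤ)
    push_cast
    rw [this]
    exact mul_dvd_mul_iff_left hN0
  constructor
  · intro h
    obtain ⟨h1, h2, h3, h4⟩ := Gamma_mem.mp h
    ext i j
    simp only [cmat, Matrix.map_apply, Matrix.zero_apply]
    fin_cases i <;> fin_cases j
    · exact (key 0 0).mp (by simpa using h1)
    · exact (key 0 1).mp (by simpa using h2)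
    · exact (key 1 0).mp (by simpa using h3)
    · exact (key 1 1).mp (by simpa using h4)
  · intro h
    rw [Gamma_mem]
    have hz : ∀ i j, ((bmat N (A : Matrix (Fin 2) (Fin 2) ℤ) i j : ℤ) : ZMod N) = 0 := by
      intro i j
      have := congrFun (congrFun h i) j
      simpa [cmat, Matrix.map_apply] using this
    refine ⟨?_, ?_, ?_, ?_⟩
    · simpa using (key 0 0).mpr (hz 0 0)
    · simpa using (key 0 1).mpr (hz 0 1)
    · simpa using (key 1 0).mpr (hz 1 0)
    · simpa using (key 1 1).mpr (hz 1 1)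

def Umat : SL(2, ℤ) := ⟨!![1, (N : ℤ); 0, 1], by simp [Matrix.det_fin_two_of]⟩
def Lmat : SL(2, ℤ) := ⟨!![1, 0; (N : ℤ), 1], by simp [Matrix.det_fin_two_of]⟩
def Dmat : SL(2, ℤ) :=
  ⟨!![1 + (N : ℤ), (N : ℤ); -(N : ℤ), 1 - (N : ℤ)], by simp [Matrix.det_fin_two_of]; ring⟩

lemma Umat_mem : Umat N ∈ Gamma N := by
  rw [Gamma_mem]
  simp [Umat]

lemma Lmat_mem : Lmat N ∈ Gamma N := by
  rw [Gamma_mem]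
  simp [Lmat]

lemma Dmat_mem : Dmat N ∈ Gamma N := by
  rw [Gamma_mem]
  refine ⟨?_, ?_, ?_, ?_⟩ <;> simp [Dmat] <;> push_cast <;> simp

lemma bmat_Umat (hN : 1 ≤ N) : bmat N ((Umat N : SL(2, ℤ)) : Matrix (Fin 2) (Fin 2) ℤ)
    = !![0, 1; 0, 0] := by
  apply bmat_eq N hN (Umat_mem N)
  ext i j
  fin_cases i <;> fin_cases j <;> simp [Umat, Matrix.one_apply]

lemma bmat_Lmat (hN : 1 ≤ N) : bmat N ((Lmat N : SL(2, ℤ)) : Matrix (Fin 2) (Fin 2) ℤ)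
    = !![0, 0; 1, 0] := by
  apply bmat_eq N hN (Lmat_mem N)
  ext i j
  fin_cases i <;> fin_cases j <;> simp [Lmat, Matrix.one_apply]

lemma bmat_Dmat (hN : 1 ≤ N) : bmat N ((Dmat N : SL(2, ℤ)) : Matrix (Fin 2) (Fin 2) ℤ)
    = !![1, 1; -1, -1] := by
  apply bmat_eq N hN (Dmat_mem N)
  ext i j
  fin_cases i <;> fin_cases j <;> simp [Dmat, Matrix.one_apply] <;> ring

end GammaQuotAux

theorem gamma_quotient_iso_traceless
    (N : ℕ) (hN : 1 ≤ N) :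
    ∃ φ : (CongruenceSubgroup.Gamma N) →*
        Multiplicative (LinearMap.ker (Matrix.traceLinearMap (Fin 2) (ZMod N) (ZMod N))),
      (∀ (A : CongruenceSubgroup.Gamma N) (B : Matrix (Fin 2) (Fin 2) ℤ),
          ((A : Matrix.SpecialLinearGroup (Fin 2) ℤ) : Matrix (Fin 2) (Fin 2) ℤ)
            = 1 + (N : ℤ) • B →
          ((Multiplicative.toAdd (φ A) : LinearMap.ker
              (Matrix.traceLinearMap (Fin 2) (ZMod N) (ZMod N)) )
            : Matrix (Fin 2) (Fin 2) (ZMod N)) = B.map (Int.cast : ℤ → ZMod N)) ∧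
      Function.Surjective φ ∧
      MonoidHom.ker φ
        = Subgroup.comap (CongruenceSubgroup.Gamma N).subtype
            (CongruenceSubgroup.Gamma (N ^ 2)) := by
  haveI : NeZero N := ⟨Nat.one_le_iff_ne_zero.mp hN⟩
  refine ⟨GammaQuotAux.phi N hN, ?_, ?_, ?_⟩
  · intro A B h
    show GammaQuotAux.cmat N ((A : SL(2, ℤ)) : Matrix (Fin 2) (Fin 2) ℤ)
      = B.map (Int.cast : ℤ → ZMod N)
    rw [GammaQuotAux.cmat, GammaQuotAux.bmat_eq N hN A.2 h]
  · -- surjectivity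
    intro x
    set y := Multiplicative.toAdd x with hy
    set C : Matrix (Fin 2) (Fin 2) (ZMod N) := (y : Matrix (Fin 2) (Fin 2) (ZMod N)) with hCdef
    have hC : Matrix.trace C = 0 := by
      have := y.2
      rwa [LinearMap.mem_ker, Matrix.traceLinearMap_apply] at this
    have htr : C 1 1 = - C 0 0 := by
      have : C 0 0 + C 1 1 = 0 := by
        simpa [Matrix.trace, Fin.sum_univ_two, Matrix.diag] using hC
      linear_combination this
    set a : ℕ := (C 0 0).val with ha
    set b : ℕ := (C 0 1 - C 0 0).val with hb2
    set c : ℕ := (C 1 0 + C 0 0).val with hc2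
    set U' : CongruenceSubgroup.Gamma N := ⟨GammaQuotAux.Umat N, GammaQuotAux.Umat_mem N⟩
    set L' : CongruenceSubgroup.Gamma N := ⟨GammaQuotAux.Lmat N, GammaQuotAux.Lmat_mem N⟩
    set D' : CongruenceSubgroup.Gamma N := ⟨GammaQuotAux.Dmat N, GammaQuotAux.Dmat_mem N⟩
    refine ⟨U' ^ b * L' ^ c * D' ^ a, ?_⟩
    have hmap : Multiplicative.toAdd ((GammaQuotAux.phi N hN) (U' ^ b * L' ^ c * D' ^ a))
        = b • Multiplicative.toAdd ((GammaQuotAux.phi N hN) U')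
          + c • Multiplicative.toAdd ((GammaQuotAux.phi N hN) L')
          + a • Multiplicative.toAdd ((GammaQuotAux.phi N hN) D') := by
      simp [_root_.map_mul, map_pow, toAdd_mul, toAdd_pow]
    have goal : Multiplicative.toAdd ((GammaQuotAux.phi N hN) (U' ^ b * L' ^ c * D' ^ a)) = y := by
      rw [hmap]
      apply Subtype.ext
      simp only [Submodule.coe_add, AddSubmonoidClass.coe_nsmul]
      show (b • GammaQuotAux.cmat N ((GammaQuotAux.Umat N : SL(2,ℤ)) : Matrix (Fin 2) (Fin 2) ℤ)
          + c • GammaQuotAux.cmat N ((GammaQuotAux.Lmat N : SL(2,ℤ)) : Matrix (Fin 2) (Fin 2) ℤ)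
          + a • GammaQuotAux.cmat N ((GammaQuotAux.Dmat N : SL(2,ℤ)) : Matrix (Fin 2) (Fin 2) ℤ)
          : Matrix (Fin 2) (Fin 2) (ZMod N)) = C
      rw [GammaQuotAux.cmat, GammaQuotAux.cmat, GammaQuotAux.cmat,
        GammaQuotAux.bmat_Umat N hN, GammaQuotAux.bmat_Lmat N hN, GammaQuotAux.bmat_Dmat N hN]
      have hAa : ((a : ℕ) : ZMod N) = C 0 0 := by
        rw [ha]; simp [ZMod.natCast_val, ZMod.cast_id]
      have hBb : ((b : ℕ) : ZMod N) = C 0 1 - C 0 0 := by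
        rw [hb2]; simp [ZMod.natCast_val, ZMod.cast_id]
      have hCc : ((c : ℕ) : ZMod N) = C 1 0 + C 0 0 := by
        rw [hc2]; simp [ZMod.natCast_val, ZMod.cast_id]
      ext i j
      fin_cases i <;> fin_cases j <;>
        simp only [Matrix.add_apply, Matrix.smul_apply, Matrix.map_apply] <;>
        simp [nsmul_eq_mul, hAa, hBb, hCc, htr] <;>
        ring
    calc (GammaQuotAux.phi N hN) (U' ^ b * L' ^ c * D' ^ a)
        = Multiplicative.ofAdd (Multiplicative.toAdd ((GammaQuotAux.phi N hN) (U' ^ b * L' ^ c * D' ^ a))) := rfl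
      _ = Multiplicative.ofAdd y := by rw [goal]
      _ = x := rfl
  · -- kernel
    ext A
    rw [MonoidHom.mem_ker, Subgroup.mem_comap]
    have hiff := GammaQuotAux.mem_gamma_sq_iff N hN A.2
    constructor
    · intro h
      have h2 : Multiplicative.toAdd ((GammaQuotAux.phi N hN) A) = 0 := by rw [h]; rfl
      exact hiff.mpr (Subtype.ext_iff.mp h2)
    · intro h
      have h2 : GammaQuotAux.cmat N ((A : SL(2,ℤ)) : Matrix (Fin 2) (Fin 2) ℤ) = 0 := hiff.mp h
      have h3 : Multiplicative.toAdd ((GammaQuotAux.phi N hN) A) = 0 := Subtype.ext h2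
      calc (GammaQuotAux.phi N hN) A
          = Multiplicative.ofAdd (Multiplicative.toAdd ((GammaQuotAux.phi N hN) A)) := rfl
        _ = Multiplicative.ofAdd 0 := by rw [h3]
        _ = 1 := rfl
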